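/- arXiv:math/9807121 — 4 statements merged into one kernel-verified Lean document; each statement's English description precedes it below -/
import Mathlib

section
/- Let $A$ be an $n \times n$ complex matrix. Then $A$ is Hermitian positive semidefinite and every entry of $A$ has modulus $1$ or $0$ if and only if there exists a unitary monomial matrix $P$ such that $P^{-1} A P$ is a direct sum of all-$1$'s matrices and a zero matrix, i.e., there is a partition of the index set $\{1,\dots,n\}$ into blocks $S_1, \dots, S_k, S_0$ such that $(P^{-1}AP)_{ij} = 1$ if $i$ and $j$ lie in the same block $S_m$ with $m \geq 1$, and $(P^{-1}AP)_{ij} = 0$ otherwise. -/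
open scoped ComplexOrder Matrix

open Matrix Complex

variable {n : ℕ}

lemma quad_single (A : Matrix (Fin n) (Fin n) ℂ) (i j : Fin n) (a b : ℂ) :
    star (Pi.single i a) ⬝ᵥ A *ᵥ (Pi.single j b) = star a * (A i j * b) := by
  rw [← Pi.single_star, single_dotProduct, Matrix.mulVec_single]
  simp

lemma expand2 (A : Matrix (Fin n) (Fin n) ℂ) (i j : Fin n) (a b : ℂ) :
    star (Pi.single i a + Pi.single j b) ⬝ᵥ A *ᵥ (Pi.single i a + Pi.single j b)
      = star a * (A i i * a) + star a * (A i j * b)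
        + (star b * (A j i * a) + star b * (A j j * b)) := by
  simp only [star_add, add_dotProduct, Matrix.mulVec_add, dotProduct_add, quad_single]
  ring

lemma expand3 (A : Matrix (Fin n) (Fin n) ℂ) (i j k : Fin n) (a b c : ℂ) :
    star (Pi.single i a + Pi.single j b + Pi.single k c) ⬝ᵥ
      A *ᵥ (Pi.single i a + Pi.single j b + Pi.single k c)
      = star a * (A i i * a) + star a * (A i j * b) + star a * (A i k * c)
        + (star b * (A j i * a) + star b * (A j j * b) + star b * (A j k * c))
        + (star c * (A k i * a) + star c * (A k j * b) + star c * (A k k * c)) := by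
  simp only [star_add, add_dotProduct, Matrix.mulVec_add, dotProduct_add, quad_single]
  ring

section Fwd
variable {A : Matrix (Fin n) (Fin n) ℂ} (hA : A.PosSemidef)
  (hmod : ∀ i j, ‖A i j‖ = 1 ∨ A i j = 0)
include hA hmod

lemma diag01 (i : Fin n) : A i i = 0 ∨ A i i = 1 := by
  have h0 : (0:ℂ) ≤ A i i := by
    have h := hA.dotProduct_mulVec_nonneg (Pi.single i 1)
    rwa [quad_single, star_one, one_mul, mul_one] at h
  rcases hmod i i with h | h
  · right
    rcases Complex.nonneg_iff.mp h0 with ⟨hre, him⟩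
    have heq : A i i = ((A i i).re : ℂ) := by
      apply Complex.ext <;> simp [← him]
    rw [heq] at h ⊢
    rw [Complex.norm_real, Real.norm_of_nonneg hre] at h
    rw [h]; norm_num
  · left; exact h

lemma offdiag_zero {i j : Fin n} (h0 : A i i = 0) : A i j = 0 := by
  by_contra hne
  rcases eq_or_ne i j with rfl | hij
  · exact hne h0
  have habs : ‖A i j‖ = 1 := (hmod i j).resolve_right hne
  have hx : star (A i j) * A i j = 1 := by
    rw [Complex.star_def, mul_comm, Complex.mul_conj, Complex.normSq_eq_norm_sq, habs]
    norm_num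
  have hji : A j i = star (A i j) := (hA.1.apply j i).symm
  have hq := hA.dotProduct_mulVec_nonneg (Pi.single i (-(A i j)) + Pi.single j 1)
  rw [expand2] at hq
  rw [h0, hji] at hq
  have hq2 : (0:ℂ) ≤ A j j - 2 := by
    have e : star (-(A i j)) * ((0:ℂ) * -(A i j)) + star (-(A i j)) * (A i j * 1)
        + (star (1:ℂ) * (star (A i j) * -(A i j)) + star (1:ℂ) * (A j j * 1))
        = A j j - 2 := by
      rw [star_neg, star_one]
      linear_combination (-2:ℂ) * hx
    exact le_of_le_of_eq hq e
  rcases Complex.nonneg_iff.mp hq2 with ⟨hre, _⟩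
  rcases diag01 hA hmod j with hj | hj <;> rw [hj] at hre <;> simp at hre <;> linarith
end Fwd

section Fwd2
variable {A : Matrix (Fin n) (Fin n) ℂ} (hA : A.PosSemidef)
  (hmod : ∀ i j, ‖A i j‖ = 1 ∨ A i j = 0)
include hA hmod

lemma triple_mul {i j k : Fin n} (hii : A i i = 1) (hjj : A j j = 1) (hkk : A k k = 1)
    (hij : A i j ≠ 0) (hjk : A j k ≠ 0) : A i k = A i j * A j k := by
  have herm : ∀ p q : Fin n, A q p = star (A p q) := fun p q => (hA.1.apply q p).symm
  set x := A i j with hxdef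
  set y := A j k with hydef
  have hx1 : ‖x‖ = 1 := (hmod i j).resolve_right hij
  have hy1 : ‖y‖ = 1 := (hmod j k).resolve_right hjk
  have hxx : star x * x = 1 := by
    rw [Complex.star_def, mul_comm, Complex.mul_conj, Complex.normSq_eq_norm_sq, hx1]; norm_num
  have hyy : y * star y = 1 := by
    rw [Complex.star_def, Complex.mul_conj, Complex.normSq_eq_norm_sq, hy1]; norm_num
  rcases eq_or_ne i j with rfl | hij'
  · rw [hxdef, ← hydef, hii, one_mul]
  rcases eq_or_ne j k with rfl | hjk'
  · rw [hydef, ← hxdef, hjj, mul_one]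
  rcases eq_or_ne i k with rfl | hik'
  · -- A i i = 1 = x * y with y = star x
    have : y = star x := by rw [hydef, hxdef, herm]
    rw [hii, this, mul_comm, hxx]
  -- now i, j, k pairwise distinct
  set z := A i k with hzdef
  set w := star x * star y * z with hwdef
  have hq := hA.dotProduct_mulVec_nonneg (Pi.single i x + Pi.single j (-2) + Pi.single k (star y))
  rw [expand3] at hq
  rw [hii, hjj, hkk, ← hxdef, ← hydef, ← hzdef, herm i j, herm j k, herm i k] at hq
  have e : star x * (1 * x) + star x * (x * -2) + star x * (z * star y)
      + (star (-2:ℂ) * (star x * x) + star (-2:ℂ) * (1 * -2) + star (-2:ℂ) * (y * star y))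
      + (star (star y) * (star z * x) + star (star y) * (star y * -2)
        + star (star y) * (1 * star y))
      = (w + star w) - 2 := by
    simp only [star_neg, star_star, star_ofNat, hwdef, star_mul']
    linear_combination (-(3:ℂ)) * hxx + (-(3:ℂ)) * hyy
  rw [e] at hq
  -- extract real part
  have hrew : 1 ≤ w.re := by
    rcases Complex.nonneg_iff.mp hq with ⟨h1, _⟩
    rw [Complex.star_def, Complex.add_conj] at h1
    have h2 : ((2 * w.re : ℝ) : ℂ) - 2 = (((2 * w.re - 2 : ℝ)) : ℂ) := by push_cast; ring
    rw [h2] at h1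
    rw [Complex.ofReal_re] at h1
    linarith
  have habsw : ‖w‖ ≤ 1 := by
    rcases eq_or_ne z 0 with hz0 | hz0
    · rw [hwdef, hz0, mul_zero]; simp
    · have hz1 : ‖z‖ = 1 := (hmod i k).resolve_right hz0
      simp only [hwdef, Complex.star_def, norm_mul, Complex.norm_conj, hx1, hy1, hz1]
      norm_num
  have hw1 : w = 1 := by
    have h3 : w.re ≤ ‖w‖ := (le_abs_self _).trans (Complex.abs_re_le_norm w)
    have hre1 : w.re = 1 := le_antisymm (h3.trans habsw) hrew
    have habs1 : ‖w‖ = 1 := le_antisymm habsw (by rw [← hre1]; exact h3)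
    have h4 : w.re ^ 2 + w.im ^ 2 = 1 := by
      have := Complex.sq_norm w
      rw [habs1, Complex.normSq_apply] at this
      nlinarith [this]
    have him : w.im = 0 := by nlinarith
    exact Complex.ext (by rw [hre1]; norm_num) (by rw [him]; norm_num)
  -- conclude z = x * y
  have : x * y * w = x * y := by rw [hw1, mul_one]
  rw [hwdef] at this
  calc A i k = z := hzdef.symm
    _ = x * y * (star x * star y * z) := by
        linear_combination (-(z * y * star y)) * hxx + (-z) * hyy
    _ = x * y := this
end Fwd2

section Fwd3
variable {A : Matrix (Fin n) (Fin n) ℂ} (hA : A.PosSemidef)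
  (hmod : ∀ i j, ‖A i j‖ = 1 ∨ A i j = 0)
include hA hmod

lemma forward : ∃ d : Fin n → ℂ, (∀ i, ‖d i‖ = 1) ∧
    ∃ c : Fin n → ℕ, ∀ i j, star (d i) * A i j * d j
      = if c i = c j ∧ c i ≠ 0 then 1 else 0 := by
  classical
  have herm : ∀ p q : Fin n, A q p = star (A p q) := fun p q => (hA.1.apply q p).symm
  have hdiag1 : ∀ p q : Fin n, A p q ≠ 0 → A p p = 1 := by
    intro p q hpq
    rcases diag01 hA hmod p with h | h
    · exact absurd (offdiag_zero hA hmod h) hpq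
    · exact h
  have hdiag2 : ∀ p q : Fin n, A p q ≠ 0 → A q q = 1 := by
    intro p q hpq
    refine hdiag1 q p fun h => hpq ?_
    rw [herm q p, h, star_zero]
  set R : Fin n → Finset (Fin n) := fun i => Finset.univ.filter (fun j => A i j ≠ 0) with hR
  have hRmem : ∀ i j, j ∈ R i ↔ A i j ≠ 0 := by intro i j; simp [hR]
  have hRne : ∀ i, A i i = 1 → (R i).Nonempty := by
    intro i hii
    exact ⟨i, (hRmem i i).mpr (by rw [hii]; exact one_ne_zero)⟩
  set rep : Fin n → Fin n := fun i => if h : (R i).Nonempty then (R i).min' h else i with hrep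
  have hrepmem : ∀ i, A i i = 1 → A i (rep i) ≠ 0 := by
    intro i hii
    have : rep i ∈ R i := by
      rw [hrep]; simp only [dif_pos (hRne i hii)]; exact Finset.min'_mem _ _
    exact (hRmem i _).mp this
  have hRR : ∀ i j, A i i = 1 → A j j = 1 → A i j ≠ 0 → R i = R j := by
    intro i j hii hjj hij
    have hji : A j i ≠ 0 := by
      rw [herm i j]; simpa using hij
    ext k
    rw [hRmem, hRmem]
    constructor
    · intro hik
      have hkk : A k k = 1 := hdiag2 i k hik
      have := triple_mul hA hmod hjj hii hkk hji hik
      rw [this]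
      exact mul_ne_zero hji hik
    · intro hjk
      have hkk : A k k = 1 := hdiag2 j k hjk
      have := triple_mul hA hmod hii hjj hkk hij hjk
      rw [this]
      exact mul_ne_zero hij hjk
  have hrepeq : ∀ i j, A i i = 1 → A j j = 1 → A i j ≠ 0 → rep i = rep j := by
    intro i j hii hjj hij
    have h1 : rep i = (R i).min' (hRne i hii) := dif_pos (hRne i hii)
    have h2 : rep j = (R j).min' (hRne j hjj) := dif_pos (hRne j hjj)
    rw [h1, h2]
    simp only [hRR i j hii hjj hij]
  refine ⟨fun i => if A i i = 1 then A i (rep i) else 1, ?_, ?_⟩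
  · intro i
    dsimp only
    by_cases h : A i i = 1
    · rw [if_pos h]
      exact (hmod i (rep i)).resolve_right (hrepmem i h)
    · rw [if_neg h]; simp
  refine ⟨fun i => if A i i = 1 then (rep i : ℕ) + 1 else 0, ?_⟩
  intro i j
  dsimp only
  by_cases hii : A i i = 1
  · by_cases hjj : A j j = 1
    · simp only [if_pos hii, if_pos hjj]
      by_cases heq : rep i = rep j
      · -- same block
        rw [if_pos ⟨by rw [heq], by simp⟩]
        set m := rep i with hm
        have him : A i m ≠ 0 := hrepmem i hii
        have hjm : A j m ≠ 0 := by rw [heq]; exact hrepmem j hjj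
        have hmm : A m m = 1 := hdiag2 i m him
        have hmj : A m j ≠ 0 := by
          rw [herm j m]; simpa using hjm
        have hAij : A i j = A i m * A m j := triple_mul hA hmod hii hmm hjj him hmj
        have h1 : star (A i m) * A i m = 1 := by
          rw [Complex.star_def, mul_comm, Complex.mul_conj, Complex.normSq_eq_norm_sq,
            (hmod i m).resolve_right him]
          norm_num
        have h2 : A m j * A j m = 1 := by
          rw [herm j m, mul_comm, Complex.star_def, Complex.mul_conj, Complex.normSq_eq_norm_sq,
            (hmod j m).resolve_right hjm]
          norm_num
        rw [hAij, hm, ← heq]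
        calc star (A i m) * (A i m * A m j) * A j m
            = (star (A i m) * A i m) * (A m j * A j m) := by ring
          _ = 1 := by rw [h1, h2, one_mul]
      · -- different blocks: A i j = 0
        have hij0 : A i j = 0 := by
          by_contra hij
          exact heq (hrepeq i j hii hjj hij)
        rw [hij0, mul_zero, zero_mul, if_neg]
        rintro ⟨h1, -⟩
        exact heq (Fin.ext (by omega))
    · -- A j j ≠ 1 hence = 0, column j vanishes
      have hjj0 : A j j = 0 := (diag01 hA hmod j).resolve_right hjj
      have : A j i = 0 := offdiag_zero hA hmod hjj0
      have hij0 : A i j = 0 := by rw [herm j i, this, star_zero]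
      rw [hij0, mul_zero, zero_mul, if_neg]
      simp only [if_pos hii, if_neg hjj]
      omega
  · have hii0 : A i i = 0 := (diag01 hA hmod i).resolve_right hii
    have hij0 : A i j = 0 := offdiag_zero hA hmod hii0
    rw [hij0, mul_zero, zero_mul, if_neg]
    simp only [if_neg hii]
    omega
end Fwd3

lemma perm_ct (σ : Equiv.Perm (Fin n)) :
    (σ.permMatrix ℂ)ᴴ = (σ.permMatrix ℂ)ᵀ := by
  ext i j
  simp only [Matrix.conjTranspose_apply, Matrix.transpose_apply, PEquiv.toMatrix_apply]
  split <;> simp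

lemma perm_unitary (σ : Equiv.Perm (Fin n)) :
    (σ.permMatrix ℂ)ᴴ * σ.permMatrix ℂ = 1 := by
  rw [perm_ct, ← PEquiv.toMatrix_symm, ← Equiv.toPEquiv_symm, ← PEquiv.toMatrix_trans,
    ← Equiv.toPEquiv_trans]
  simp

lemma diag_star_mul (d : Fin n → ℂ) (hd : ∀ i, ‖d i‖ = 1) :
    (Matrix.diagonal d)ᴴ * Matrix.diagonal d = 1 := by
  rw [Matrix.diagonal_conjTranspose, Matrix.diagonal_mul_diagonal]
  have : (fun i => star d i * d i) = fun _ => (1:ℂ) := by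
    funext i
    show star (d i) * d i = 1
    rw [Complex.star_def, mul_comm, Complex.mul_conj, Complex.normSq_eq_norm_sq, hd i]
    norm_num
  rw [this, Matrix.diagonal_one]

lemma pd_unitary (σ : Equiv.Perm (Fin n)) (d : Fin n → ℂ) (hd : ∀ i, ‖d i‖ = 1) :
    (σ.permMatrix ℂ * Matrix.diagonal d)ᴴ * (σ.permMatrix ℂ * Matrix.diagonal d) = 1 := by
  rw [Matrix.conjTranspose_mul]
  calc (Matrix.diagonal d)ᴴ * (σ.permMatrix ℂ)ᴴ * (σ.permMatrix ℂ * Matrix.diagonal d)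
      = (Matrix.diagonal d)ᴴ * ((σ.permMatrix ℂ)ᴴ * σ.permMatrix ℂ) * Matrix.diagonal d := by
        simp only [Matrix.mul_assoc]
    _ = (Matrix.diagonal d)ᴴ * Matrix.diagonal d := by rw [perm_unitary]; simp [Matrix.mul_assoc]
    _ = 1 := diag_star_mul d hd

/-- A matrix `A ∈ ℂ^{n×n}` is Hermitian positive semidefinite with all entries of
modulus `1` or `0` iff there is a unitary monomial matrix `P = QD` (`Q` a permutation
matrix, `D` unitary diagonal) such that `P⁻¹ A P` is a direct sum of all-`1`'s blocks
and a zero block, encoded by a block labeling `c` where label `0` is the zero block. -/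
theorem stmt0 (n : ℕ) (A : Matrix (Fin n) (Fin n) ℂ) :
    (A.PosSemidef ∧ ∀ i j, ‖A i j‖ = 1 ∨ A i j = 0) ↔
    ∃ (σ : Equiv.Perm (Fin n)) (d : Fin n → ℂ),
      (∀ i, ‖d i‖ = 1) ∧
      ∃ c : Fin n → ℕ,
        ∀ i j, ((σ.permMatrix ℂ * Matrix.diagonal d)⁻¹ * A *
            (σ.permMatrix ℂ * Matrix.diagonal d)) i j
          = if c i = c j ∧ c i ≠ 0 then 1 else 0 := by
  constructor
  · rintro ⟨hA, hmod⟩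
    obtain ⟨d, hd, c, hc⟩ := forward hA hmod
    refine ⟨1, d, hd, c, ?_⟩
    intro i j
    have hperm : ((1 : Equiv.Perm (Fin n)).permMatrix ℂ) = (1 : Matrix (Fin n) (Fin n) ℂ) := by
      ext a b
      simp [PEquiv.toMatrix_apply, Equiv.toPEquiv_apply, Matrix.one_apply, eq_comm]
    rw [hperm, one_mul]
    have hinv : (Matrix.diagonal d)⁻¹ = Matrix.diagonal (star d) := by
      apply Matrix.inv_eq_left_inv
      have := diag_star_mul d hd
      rwa [Matrix.diagonal_conjTranspose] at this
    rw [hinv, Matrix.mul_diagonal, Matrix.diagonal_mul]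
    exact hc i j
  · rintro ⟨σ, d, hd, c, h⟩
    set P := σ.permMatrix ℂ * Matrix.diagonal d with hPdef
    have hU : Pᴴ * P = 1 := pd_unitary σ d hd
    have hUr : P * Pᴴ = 1 := mul_eq_one_comm.mp hU
    have hPinv : P⁻¹ = Pᴴ := Matrix.inv_eq_left_inv hU
    set B : Matrix (Fin n) (Fin n) ℂ :=
      Matrix.of (fun i j => if c i = c j ∧ c i ≠ 0 then (1:ℂ) else 0) with hBdef
    have hB : P⁻¹ * A * P = B := by
      ext i j
      rw [h i j]
      rfl
    have hAPB : A = P * B * Pᴴ := by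
      rw [← hB, hPinv]
      calc A = (P * Pᴴ) * A * (P * Pᴴ) := by rw [hUr, one_mul, mul_one]
        _ = P * (Pᴴ * A * P) * Pᴴ := by simp only [Matrix.mul_assoc]
    -- B is positive semidefinite as a sum of rank-one matrices
    classical
    set T : Finset ℕ := (Finset.image c Finset.univ).erase 0 with hT
    set χ : ℕ → Fin n → ℂ := fun m i => if c i = m then 1 else 0 with hχ
    have hrank1 : ∀ m : ℕ,
        (Matrix.of fun i j => χ m i * χ m j : Matrix (Fin n) (Fin n) ℂ).PosSemidef := by
      intro m
      have key : (Matrix.of fun i j => χ m i * χ m j : Matrix (Fin n) (Fin n) ℂ)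
          = (Matrix.of fun (_ : Fin 1) j => χ m j)ᴴ * (Matrix.of fun (_ : Fin 1) j => χ m j) := by
        ext i j
        rw [Matrix.mul_apply]
        simp only [Matrix.conjTranspose_apply, Matrix.of_apply, Fin.sum_univ_one]
        congr 1
        simp only [hχ]
        split <;> simp
      rw [key]
      exact Matrix.posSemidef_conjTranspose_mul_self _
    have hBsum : B = ∑ m ∈ T, (Matrix.of fun i j => χ m i * χ m j) := by
      ext i j
      rw [Matrix.sum_apply]
      simp only [Matrix.of_apply]
      by_cases hcij : c i = c j ∧ c i ≠ 0
      · obtain ⟨h1, h2⟩ := hcij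
        have hterm : ∀ m : ℕ, χ m i * χ m j = if m = c i then 1 else 0 := by
          intro m
          rw [hχ]
          dsimp only
          rw [← h1]
          by_cases hm : c i = m
          · rw [if_pos hm, if_pos hm.symm, one_mul]
          · rw [if_neg hm, if_neg (fun hh => hm hh.symm), zero_mul]
        rw [Finset.sum_congr rfl (fun m _ => hterm m), Finset.sum_ite_eq' T (c i) (fun _ => (1:ℂ))]
        rw [if_pos, hBdef, Matrix.of_apply, if_pos ⟨h1, h2⟩]
        rw [hT]
        exact Finset.mem_erase.mpr ⟨h2, Finset.mem_image_of_mem c (Finset.mem_univ i)⟩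
      · rw [hBdef, Matrix.of_apply, if_neg hcij]
        apply (Finset.sum_eq_zero _).symm
        intro m hm
        have hm0 : m ≠ 0 := by
          rw [hT] at hm
          exact (Finset.mem_erase.mp hm).1
        rw [hχ]
        dsimp only
        by_cases h1 : c i = m
        · by_cases h2 : c j = m
          · exact absurd ⟨h1.trans h2.symm, h1 ▸ hm0⟩ hcij
          · rw [if_neg h2, mul_zero]
        · rw [if_neg h1, zero_mul]
    have hBpsd : B.PosSemidef := by
      rw [hBsum]
      exact Finset.sum_induction _ Matrix.PosSemidef (fun a b ha hb => ha.add hb)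
        Matrix.PosSemidef.zero (fun m _ => hrank1 m)
    constructor
    · rw [hAPB]
      exact hBpsd.mul_mul_conjTranspose_same P
    · -- entries of A
      have hPapp : ∀ i j, P i j = if j = σ i then d j else 0 := by
        intro i j
        rw [hPdef, PEquiv.toMatrix_toPEquiv_mul, Matrix.submatrix_apply, Matrix.diagonal_apply]
        simp only [id_eq]
        by_cases hij : σ i = j
        · subst hij; simp
        · rw [if_neg hij, if_neg (Ne.symm hij)]
      have hPBapp : ∀ i l, (P * B) i l = d (σ i) * B (σ i) l := by
        intro i l
        rw [Matrix.mul_apply, Finset.sum_eq_single (σ i)]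
        · rw [hPapp]; simp
        · intro k _ hk
          rw [hPapp, if_neg hk, zero_mul]
        · intro h; exact absurd (Finset.mem_univ _) h
      have hAapp : ∀ i j, A i j = d (σ i) * B (σ i) (σ j) * star (d (σ j)) := by
        intro i j
        rw [hAPB, Matrix.mul_apply, Finset.sum_eq_single (σ j)]
        · rw [hPBapp, Matrix.conjTranspose_apply, hPapp]; simp
        · intro l _ hl
          rw [Matrix.conjTranspose_apply, hPapp, if_neg hl, star_zero, mul_zero]
        · intro h; exact absurd (Finset.mem_univ _) h
      intro i j
      rw [hAapp i j]
      by_cases hcond : c (σ i) = c (σ j) ∧ c (σ i) ≠ 0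
      · left
        rw [hBdef, Matrix.of_apply, if_pos hcond, mul_one]
        rw [norm_mul, hd (σ i), Complex.star_def, Complex.norm_conj, hd (σ j), one_mul]
      · right
        rw [hBdef, Matrix.of_apply, if_neg hcond, mul_zero, zero_mul]
end

section
/- If $A$ is an $n \times n$ positive semidefinite real symmetric matrix all of whose entries are $0$ or $1$, then $A$ is permutationally similar to a direct sum of matrices each of which is either an all-$1$'s matrix or a zero matrix; i.e., there is a permutation matrix $Q$ and a partition of the index set $\{1,\dots,n\}$ into blocks $S_1, \dots, S_k, S_0$ such that $(Q^{T}AQ)_{ij} = 1$ if $i$ and $j$ lie in the same block $S_m$ with $m \geq 1$, and $(Q^{T}AQ)_{ij} = 0$ otherwise. -/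
open scoped Matrix

lemma quad3 {n : ℕ} (A : Matrix (Fin n) (Fin n) ℝ) (hA : A.PosSemidef)
    (i j k : Fin n) (a b c : ℝ) :
    0 ≤ a*a*A i i + a*b*A i j + a*c*A i k + b*a*A j i + b*b*A j j + b*c*A j k
      + c*a*A k i + c*b*A k j + c*c*A k k := by
  set v : Fin n → ℝ := fun x =>
    a * ((Pi.single i 1 : Fin n → ℝ) x) + b * ((Pi.single j 1 : Fin n → ℝ) x)
      + c * ((Pi.single k 1 : Fin n → ℝ) x) with hv
  have hveq : v = a • (Pi.single i 1 : Fin n → ℝ) + b • (Pi.single j 1 : Fin n → ℝ)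
      + c • (Pi.single k 1 : Fin n → ℝ) := by
    funext x; simp [hv]
  have h := hA.dotProduct_mulVec_nonneg v
  rw [hveq] at h
  simp only [star_trivial, Matrix.mulVec_add, Matrix.mulVec_smul, Matrix.mulVec_single,
    dotProduct_add, add_dotProduct, smul_dotProduct,
    dotProduct_smul, single_dotProduct, smul_eq_mul, mul_one,
    Pi.add_apply, Pi.smul_apply, MulOpposite.op_one, one_smul, one_mul, Matrix.col_apply] at h
  convert h using 1
  · rfl
  ring

/-- A positive semidefinite real symmetric `(0,1)`-matrix is permutationally similar to
a direct sum of all-`1`'s blocks and a zero block, encoded by a block labeling `c`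
where label `0` is the zero block. -/
theorem stmt1 (n : ℕ) (A : Matrix (Fin n) (Fin n) ℝ)
    (hA : A.PosSemidef) (h01 : ∀ i j, A i j = 0 ∨ A i j = 1) :
    ∃ (σ : Equiv.Perm (Fin n)) (c : Fin n → ℕ),
      ∀ i j, ((σ.permMatrix ℝ)ᵀ * A * σ.permMatrix ℝ) i j
        = if c i = c j ∧ c i ≠ 0 then 1 else 0 := by
  classical
  have hsym : ∀ i j, A j i = A i j := fun i j => by simpa using hA.1.apply i j
  have hzero : ∀ i j, A i i = 0 → A i j = 0 := by
    intro i j h0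
    rcases h01 i j with h | h
    · exact h
    · exfalso
      have hq := quad3 A hA i j j (-2) 1 0
      have hji : A j i = 1 := (hsym i j).trans h
      rcases h01 j j with hjj | hjj <;> rw [h0, h, hji, hjj] at hq <;> linarith
  have hd : ∀ i j, A i j = 1 → A i i = 1 := by
    intro i j h1
    rcases h01 i i with h | h
    · exact absurd (hzero i j h) (by rw [h1]; norm_num)
    · exact h
  have htr : ∀ i j k, A i j = 1 → A j k = 1 → A i k = 1 := by
    intro i j k hij hjk
    rcases h01 i k with h | h
    · exfalso
      have hq := quad3 A hA i j k 1 (-1) 1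
      have hii := hd i j hij
      have hjj := hd j k hjk
      have hkk := hd k j ((hsym j k).trans hjk)
      rw [hii, hjj, hkk, hij, hjk, h, hsym i j, hsym j k, hsym i k, hij, hjk, h] at hq
      linarith
    · exact h
  set S : Fin n → Set ℕ := fun i => {m : ℕ | ∃ h : m < n, A ⟨m, h⟩ i = 1} with hS
  set c : Fin n → ℕ := fun i => if A i i = 1 then sInf (S i) + 1 else 0 with hc
  refine ⟨Equiv.refl _, c, ?_⟩
  have hperm : (Equiv.Perm.permMatrix ℝ (Equiv.refl (Fin n))) = 1 := by
    simp [Equiv.Perm.permMatrix, Equiv.toPEquiv_refl, PEquiv.toMatrix_refl]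
  intro i j
  rw [hperm, Matrix.transpose_one, Matrix.one_mul, Matrix.mul_one]
  rcases h01 i i with hii | hii
  · have hci : c i = 0 := by simp [hc, hii]
    rw [hzero i j hii, if_neg]
    rintro ⟨-, h2⟩; exact h2 hci
  rcases h01 j j with hjj | hjj
  · have hcj : c j = 0 := by simp [hc, hjj]
    rw [(hsym i j).symm.trans (hzero j i hjj), if_neg]
    rintro ⟨h1, h2⟩; exact h2 (h1.trans hcj)
  have hci : c i = sInf (S i) + 1 := by simp [hc, hii]
  have hcj : c j = sInf (S j) + 1 := by simp [hc, hjj]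
  have hSi : (S i).Nonempty := ⟨i.val, i.isLt, by simpa using hii⟩
  have hSj : (S j).Nonempty := ⟨j.val, j.isLt, by simpa using hjj⟩
  rcases h01 i j with hij | hij
  · rw [hij, if_neg]
    rintro ⟨h1, -⟩
    rw [hci, hcj] at h1
    have hm : sInf (S i) ∈ S i := Nat.sInf_mem hSi
    have hm' : sInf (S i) ∈ S j := by
      rw [Nat.add_right_cancel h1]; exact Nat.sInf_mem hSj
    obtain ⟨hlt, hmi⟩ := hm
    obtain ⟨hlt', hmj⟩ := hm'
    have : A i j = 1 := htr i ⟨sInf (S i), hlt⟩ j ((hsym _ _).trans hmi) hmj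
    rw [hij] at this; norm_num at this
  · rw [hij, if_pos]
    have hSeq : S i = S j := by
      ext m
      constructor
      · rintro ⟨h, hm⟩; exact ⟨h, htr _ i j hm hij⟩
      · rintro ⟨h, hm⟩; exact ⟨h, htr _ j i hm ((hsym i j).trans hij)⟩
    refine ⟨by rw [hci, hcj, hSeq], by rw [hci]; exact Nat.succ_ne_zero _⟩
end

section
/- Let $A \in \mathbb{C}^{n \times n}$ be a Hermitian positive semidefinite matrix all of whose nonzero entries have modulus $1$. Then there exist matrices $L, U \in \mathbb{C}^{n \times n}$ with $L$ lower triangular and nonsingular, $U$ upper triangular, $A = LU$, and a unitary diagonal matrix $D$ (a diagonal matrix all of whose diagonal entries have modulus $1$) such that both $D^{-1} L D$ and $D^{-1} U D$ have all entries equal to $0$ or $1$. -/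
open scoped ComplexOrder Matrix

lemma psd_det_nonneg {m : Type*} [Fintype m] [DecidableEq m] {M : Matrix m m ℂ}
    (hM : M.PosSemidef) : 0 ≤ M.det := by
  rw [hM.isHermitian.det_eq_prod_eigenvalues]
  refine Finset.prod_nonneg fun i _ => ?_
  rw [Complex.nonneg_iff]
  simpa using hM.eigenvalues_nonneg i

section aux
variable {n : ℕ} {A : Matrix (Fin n) (Fin n) ℂ}

lemma aux_herm (hA : A.PosSemidef) (i j : Fin n) : A j i = (starRingEnd ℂ) (A i j) :=
  (hA.1.apply j i).symm

lemma aux_det2 (hA : A.PosSemidef) (i j : Fin n) :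
    0 ≤ A i i * A j j - A i j * A j i := by
  have h2 := psd_det_nonneg (hA.submatrix ![i, j])
  rw [Matrix.det_fin_two] at h2
  simpa [Matrix.submatrix_apply] using h2

lemma aux_zero_row (hA : A.PosSemidef) {i : Fin n} (hi : A i i = 0) (j : Fin n) :
    A i j = 0 := by
  have h2 := aux_det2 hA i j
  rw [hi, zero_mul, zero_sub, aux_herm hA i j, Complex.mul_conj, Complex.nonneg_iff] at h2
  have : Complex.normSq (A i j) = 0 := le_antisymm (by simpa using h2.1) (Complex.normSq_nonneg _)
  exact Complex.normSq_eq_zero.mp this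

lemma aux_diag_one (hA : A.PosSemidef)
    (h : ∀ i j, A i j ≠ 0 → ‖A i j‖ = 1) {i : Fin n} (hi : A i i ≠ 0) :
    A i i = 1 := by
  have h1 := psd_det_nonneg (hA.submatrix ![i])
  rw [Matrix.det_fin_one] at h1
  simp only [Matrix.submatrix_apply] at h1
  rw [Complex.nonneg_iff] at h1
  have habs := h i i hi
  have him : (A i i).im = 0 := h1.2.symm
  have : A i i = ((A i i).re : ℂ) := Complex.ext rfl (by simp [him])
  rw [this] at habs ⊢
  rw [Complex.norm_real, Real.norm_eq_abs, abs_of_nonneg (by simpa using h1.1)] at habs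
  simp [habs]

lemma aux_trans (hA : A.PosSemidef)
    (h : ∀ i j, A i j ≠ 0 → ‖A i j‖ = 1) {i j k : Fin n}
    (hij : A i j ≠ 0) (hjk : A j k ≠ 0) : A i k = A i j * A j k := by
  have hii : A i i = 1 := aux_diag_one hA h (fun h0 => hij (aux_zero_row hA h0 j))
  have hjj : A j j = 1 := aux_diag_one hA h (fun h0 => hjk (aux_zero_row hA h0 k))
  have hkk : A k k = 1 := aux_diag_one hA h (fun h0 => hjk (by
    rw [aux_herm hA k j, aux_zero_row hA h0 j, map_zero]))
  have h3 := psd_det_nonneg (hA.submatrix ![i, j, k])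
  rw [Matrix.det_fin_three] at h3
  simp only [Matrix.submatrix_apply, Matrix.cons_val_zero, Matrix.cons_val_one,
    Matrix.head_cons, Matrix.cons_val_two, Matrix.tail_cons, Matrix.head_fin_const] at h3
  rw [hii, hjj, hkk, aux_herm hA j k, aux_herm hA i j, aux_herm hA i k] at h3
  set u := A i j with hu
  set w := A j k with hw
  set z := A i k with hz
  have hnu : Complex.normSq u = 1 := by
    have := h i j hij; rw [← Complex.sq_norm, this, one_pow]
  have hnw : Complex.normSq w = 1 := by
    have := h j k hjk; rw [← Complex.sq_norm, this, one_pow]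
  rw [Complex.nonneg_iff] at h3
  have hre := h3.1
  set t := u * w * (starRingEnd ℂ) z with ht
  have key : 1 + Complex.normSq z ≤ 2 * t.re := by
    have e1 : (1 * 1 * 1 - 1 * w * (starRingEnd ℂ) w - u * (starRingEnd ℂ) u * 1 +
        u * w * (starRingEnd ℂ) z + z * (starRingEnd ℂ) u * (starRingEnd ℂ) w -
        z * 1 * (starRingEnd ℂ) z)
        = ((1 - Complex.normSq w - Complex.normSq u - Complex.normSq z : ℝ) : ℂ)
          + (t + (starRingEnd ℂ) t) := by
      rw [ht]
      push_cast
      rw [← Complex.mul_conj w, ← Complex.mul_conj u, ← Complex.mul_conj z]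
      simp only [map_mul, Complex.conj_conj]
      ring
    rw [e1] at hre
    rw [Complex.add_conj] at hre
    simp only [Complex.add_re, Complex.ofReal_re, Complex.ofReal_im] at hre
    rw [hnu, hnw] at hre
    linarith
  have hz0 : z ≠ 0 := by
    intro h0
    rw [h0] at key ht
    simp [ht] at key
    nlinarith [Complex.normSq_nonneg z, key]
  have hnz : Complex.normSq z = 1 := by
    have := h i k hz0; rw [← Complex.sq_norm, this, one_pow]
  have habs_t : ‖t‖ = 1 := by
    rw [ht]
    simp only [norm_mul, Complex.norm_conj]
    rw [h i j hij, h j k hjk, h i k hz0]; ring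
  have htre : t.re = 1 := by
    have h1 : 1 ≤ t.re := by rw [hnz] at key; linarith
    have h2 : t.re ≤ 1 := by
      calc t.re ≤ ‖t‖ := Complex.re_le_norm t
      _ = 1 := habs_t
    linarith
  have ht1 : t = 1 := by
    have hnt : Complex.normSq t = 1 := by
      rw [← Complex.sq_norm, habs_t, one_pow]
    have : t.im = 0 := by
      have := Complex.normSq_apply t
      nlinarith [this, hnt, htre]
    exact Complex.ext (by simp [htre]) (by simp [this])
  have : z * t = z := by rw [ht1, mul_one]
  rw [ht] at this
  calc z = z * (u * w * (starRingEnd ℂ) z) := this.symm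
  _ = u * w * (z * (starRingEnd ℂ) z) := by ring
  _ = u * w * ((Complex.normSq z : ℝ) : ℂ) := by rw [Complex.mul_conj]
  _ = u * w := by rw [hnz]; simp

end aux

noncomputable section auxdefs
variable {n : ℕ}

def auxC (A : Matrix (Fin n) (Fin n) ℂ) (i : Fin n) : Finset (Fin n) :=
  @Finset.filter _ (fun j => A i j ≠ 0) (Classical.decPred _) Finset.univ

lemma mem_auxC {A : Matrix (Fin n) (Fin n) ℂ} {i j : Fin n} :
    j ∈ auxC A i ↔ A i j ≠ 0 := by
  classical simp [auxC]

def auxr (A : Matrix (Fin n) (Fin n) ℂ) (i : Fin n) : Fin n :=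
  if h : (auxC A i).Nonempty then (auxC A i).min' h else i

def auxd (A : Matrix (Fin n) (Fin n) ℂ) (i : Fin n) : ℂ :=
  if (auxC A i).Nonempty then A i (auxr A i) else 1

end auxdefs

section aux2
variable {n : ℕ} {A : Matrix (Fin n) (Fin n) ℂ}

lemma aux_sym (hA : A.PosSemidef) {i j : Fin n} (hij : A i j ≠ 0) : A j i ≠ 0 := by
  rw [aux_herm hA i j]
  intro h0
  exact hij (by simpa using congrArg (starRingEnd ℂ) h0)

lemma auxC_eq (hA : A.PosSemidef) (h : ∀ i j, A i j ≠ 0 → ‖A i j‖ = 1)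
    {i j : Fin n} (hij : A i j ≠ 0) : auxC A i = auxC A j := by
  have hji := aux_sym hA hij
  ext k
  rw [mem_auxC, mem_auxC]
  constructor
  · intro hik
    rw [aux_trans hA h hji hik]
    exact mul_ne_zero hji hik
  · intro hjk
    rw [aux_trans hA h hij hjk]
    exact mul_ne_zero hij hjk

lemma auxr_eq (hA : A.PosSemidef) (h : ∀ i j, A i j ≠ 0 → ‖A i j‖ = 1)
    {i j : Fin n} (hij : A i j ≠ 0) : auxr A i = auxr A j := by
  have hne : (auxC A j).Nonempty := ⟨i, mem_auxC.mpr (aux_sym hA hij)⟩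
  unfold auxr
  rw [auxC_eq hA h hij, dif_pos hne, dif_pos hne]

lemma auxC_ne {i : Fin n} (hi : A i i ≠ 0) : (auxC A i).Nonempty :=
  ⟨i, mem_auxC.mpr hi⟩

lemma auxr_mem {i : Fin n} (hi : A i i ≠ 0) : A i (auxr A i) ≠ 0 := by
  rw [auxr, dif_pos (auxC_ne hi)]
  exact mem_auxC.mp ((auxC A i).min'_mem _)

lemma auxr_le {i : Fin n} (hi : A i i ≠ 0) : auxr A i ≤ i := by
  rw [auxr, dif_pos (auxC_ne hi)]
  exact Finset.min'_le _ _ (mem_auxC.mpr hi)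

lemma auxC_empty (hA : A.PosSemidef) {i : Fin n} (hi : A i i = 0) :
    ¬(auxC A i).Nonempty := by
  rintro ⟨j, hj⟩
  exact (mem_auxC.mp hj) (aux_zero_row hA hi j)

lemma auxd_eq {i : Fin n} (hi : A i i ≠ 0) : auxd A i = A i (auxr A i) :=
  if_pos (auxC_ne hi)

lemma auxd_abs (hA : A.PosSemidef) (h : ∀ i j, A i j ≠ 0 → ‖A i j‖ = 1)
    (i : Fin n) : ‖auxd A i‖ = 1 := by
  by_cases hi : A i i = 0
  · rw [auxd, if_neg (auxC_empty hA hi)]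
    simp
  · rw [auxd_eq hi]
    exact h i (auxr A i) (auxr_mem hi)

lemma auxd_ne (hA : A.PosSemidef) (h : ∀ i j, A i j ≠ 0 → ‖A i j‖ = 1)
    (i : Fin n) : auxd A i ≠ 0 := by
  intro h0
  have := auxd_abs hA h i
  rw [h0] at this
  simp at this

lemma auxr_fix (hA : A.PosSemidef) (h : ∀ i j, A i j ≠ 0 → ‖A i j‖ = 1)
    {i : Fin n} (hi : A i i ≠ 0) : auxr A (auxr A i) = auxr A i :=
  (auxr_eq hA h (auxr_mem hi)).symm

end aux2

/-- A Hermitian positive semidefinite matrix whose nonzero entries all have modulus `1`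
admits an LU factorization `A = L U` with `L` lower triangular and nonsingular, `U`
upper triangular, such that `D⁻¹ L D` and `D⁻¹ U D` are `(0,1)`-matrices for some
unitary diagonal matrix `D`. -/
theorem stmt8 (n : ℕ) (A : Matrix (Fin n) (Fin n) ℂ) (hA : A.PosSemidef)
    (h : ∀ i j, A i j ≠ 0 → ‖A i j‖ = 1) :
    ∃ L U : Matrix (Fin n) (Fin n) ℂ,
      (∀ i j : Fin n, i < j → L i j = 0) ∧ IsUnit L.det ∧
      (∀ i j : Fin n, j < i → U i j = 0) ∧ A = L * U ∧
      ∃ d : Fin n → ℂ, (∀ i, ‖d i‖ = 1) ∧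
        (∀ i j, ((Matrix.diagonal d)⁻¹ * L * Matrix.diagonal d) i j = 0 ∨
                ((Matrix.diagonal d)⁻¹ * L * Matrix.diagonal d) i j = 1) ∧
        (∀ i j, ((Matrix.diagonal d)⁻¹ * U * Matrix.diagonal d) i j = 0 ∨
                ((Matrix.diagonal d)⁻¹ * U * Matrix.diagonal d) i j = 1) := by
  classical
  set D : Matrix (Fin n) (Fin n) ℂ := Matrix.diagonal (auxd A) with hDdef
  set L₀ : Matrix (Fin n) (Fin n) ℂ :=
    Matrix.of fun i j => if j = i ∨ (A i i ≠ 0 ∧ j = auxr A i) then (1:ℂ) else 0 with hL₀def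
  set U₀ : Matrix (Fin n) (Fin n) ℂ :=
    Matrix.of fun i j => if auxr A i = i ∧ A i j ≠ 0 then (1:ℂ) else 0 with hU₀def
  set B : Matrix (Fin n) (Fin n) ℂ :=
    Matrix.of fun i j => if A i j ≠ 0 then (1:ℂ) else 0 with hBdef
  have hdetD : IsUnit D.det := by
    rw [hDdef, Matrix.det_diagonal, isUnit_iff_ne_zero]
    exact Finset.prod_ne_zero_iff.mpr fun i _ => auxd_ne hA h i
  have hDiD : D⁻¹ * D = 1 := Matrix.nonsing_inv_mul D hdetD
  have hDinv : D⁻¹ = Matrix.diagonal (fun i => (auxd A i)⁻¹) := by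
    refine Matrix.inv_eq_right_inv ?_
    have hfun : (fun i => auxd A i * (auxd A i)⁻¹) = fun _ => (1:ℂ) :=
      funext fun i => mul_inv_cancel₀ (auxd_ne hA h i)
    rw [hDdef, Matrix.diagonal_mul_diagonal, hfun, Matrix.diagonal_one]
  have hL0tri : ∀ i j : Fin n, i < j → L₀ i j = 0 := by
    intro i j hij
    rw [hL₀def, Matrix.of_apply, if_neg]
    rintro (rfl | ⟨hi, rfl⟩)
    · exact lt_irrefl _ hij
    · exact absurd hij (not_lt.mpr (auxr_le hi))
  have hU0tri : ∀ i j : Fin n, j < i → U₀ i j = 0 := by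
    intro i j hij
    rw [hU₀def, Matrix.of_apply, if_neg]
    rintro ⟨hri, hAij⟩
    have : auxr A i ≤ j := by
      rw [auxr, dif_pos ⟨j, mem_auxC.mpr hAij⟩]
      exact Finset.min'_le _ _ (mem_auxC.mpr hAij)
    rw [hri] at this
    exact absurd hij (not_lt.mpr this)
  have hL0det : L₀.det = 1 := by
    rw [Matrix.det_of_lowerTriangular L₀ (fun i j hlt => hL0tri i j hlt)]
    refine Finset.prod_eq_one fun i _ => ?_
    rw [hL₀def, Matrix.of_apply, if_pos (Or.inl rfl)]
  have hB : L₀ * U₀ = B := by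
    ext i j
    rw [Matrix.mul_apply, hBdef, Matrix.of_apply]
    by_cases hi : A i i = 0
    · have hrow : A i j = 0 := aux_zero_row hA hi j
      have hLk : ∀ k, L₀ i k = if k = i then (1:ℂ) else 0 := by
        intro k
        rw [hL₀def, Matrix.of_apply]
        simp [hi]
      simp only [hLk, ite_mul, one_mul, zero_mul]
      rw [Finset.sum_ite_eq' Finset.univ i (fun k => U₀ k j)]
      simp only [Finset.mem_univ, if_true]
      rw [hU₀def, Matrix.of_apply, if_neg (fun hc => hc.2 hrow), if_neg (fun hc => hc hrow)]
    · by_cases hri : auxr A i = i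
      · have hLk : ∀ k, L₀ i k = if k = i then (1:ℂ) else 0 := by
          intro k
          rw [hL₀def, Matrix.of_apply]
          simp [hri, hi]
        simp only [hLk, ite_mul, one_mul, zero_mul]
        rw [Finset.sum_ite_eq' Finset.univ i (fun k => U₀ k j)]
        simp only [Finset.mem_univ, if_true]
        rw [hU₀def, Matrix.of_apply]
        simp [hri]
      · have hLk : ∀ k, L₀ i k =
            (if k = i then (1:ℂ) else 0) + (if k = auxr A i then (1:ℂ) else 0) := by
          intro k
          rw [hL₀def, Matrix.of_apply]
          by_cases h1 : k = i
          · subst h1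
            simp [hri, Ne.symm hri]
          · by_cases h2 : k = auxr A i
            · subst h2
              simp [h1, hi]
            · simp [h1, h2]
        simp only [hLk, add_mul, Finset.sum_add_distrib, ite_mul, one_mul, zero_mul]
        rw [Finset.sum_ite_eq' Finset.univ i (fun k => U₀ k j),
          Finset.sum_ite_eq' Finset.univ (auxr A i) (fun k => U₀ k j)]
        simp only [Finset.mem_univ, if_true]
        have hU0i : U₀ i j = 0 := by
          rw [hU₀def, Matrix.of_apply, if_neg (fun hc => hri hc.1)]
        have him : A i (auxr A i) ≠ 0 := auxr_mem hi
        have hmi : A (auxr A i) i ≠ 0 := aux_sym hA him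
        have hiff : A (auxr A i) j ≠ 0 ↔ A i j ≠ 0 := by
          constructor
          · intro hmj
            rw [aux_trans hA h him hmj]
            exact mul_ne_zero him hmj
          · intro hij2
            rw [aux_trans hA h hmi hij2]
            exact mul_ne_zero hmi hij2
        have hU0m : U₀ (auxr A i) j = if A i j ≠ 0 then (1:ℂ) else 0 := by
          rw [hU₀def, Matrix.of_apply]
          by_cases hj2 : A i j ≠ 0
          · rw [if_pos ⟨auxr_fix hA h hi, hiff.mpr hj2⟩, if_pos hj2]
          · rw [if_neg (fun hc => hj2 (hiff.mp hc.2)), if_neg hj2]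
        rw [hU0i, hU0m, zero_add]
  have hA_eq : A = D * B * D⁻¹ := by
    ext i j
    rw [hDinv, Matrix.mul_diagonal, hDdef, Matrix.diagonal_mul, hBdef, Matrix.of_apply]
    by_cases hij : A i j = 0
    · rw [if_neg (fun hc => hc hij)]
      simp [hij]
    · rw [if_pos hij, mul_one]
      have hii : A i i ≠ 0 := fun h0 => hij (aux_zero_row hA h0 j)
      have hjj : A j j ≠ 0 := fun h0 => (aux_sym hA hij) (aux_zero_row hA h0 i)
      rw [auxd_eq hii, auxd_eq hjj]
      have hrr : auxr A i = auxr A j := auxr_eq hA h hij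
      have hkey : A i (auxr A j) = A i j * A j (auxr A j) := aux_trans hA h hij (auxr_mem hjj)
      rw [hrr, eq_mul_inv_iff_mul_eq₀ (auxr_mem hjj)]
      exact hkey.symm
  have hLent : ∀ (M : Matrix (Fin n) (Fin n) ℂ) (i j : Fin n),
      (D * M * D⁻¹) i j = auxd A i * M i j * (auxd A j)⁻¹ := by
    intro M i j
    rw [hDinv, Matrix.mul_diagonal, hDdef, Matrix.diagonal_mul]
  have hcanc : ∀ M : Matrix (Fin n) (Fin n) ℂ, D⁻¹ * (D * M * D⁻¹) * D = M := by
    intro M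
    simp only [Matrix.mul_assoc]
    rw [hDiD, Matrix.mul_one, ← Matrix.mul_assoc, hDiD, Matrix.one_mul]
  refine ⟨D * L₀ * D⁻¹, D * U₀ * D⁻¹, ?_, ?_, ?_, ?_, auxd A, auxd_abs hA h, ?_, ?_⟩
  · intro i j hij
    rw [hLent, hL0tri i j hij, mul_zero, zero_mul]
  · have hdet1 : (D * L₀ * D⁻¹).det = 1 := by
      rw [Matrix.det_mul, Matrix.det_mul, hL0det, mul_one, Matrix.det_nonsing_inv,
        Ring.mul_inverse_cancel _ hdetD]
    rw [hdet1]
    exact isUnit_one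
  · intro i j hij
    rw [hLent, hU0tri i j hij, mul_zero, zero_mul]
  · have hmid : (D * L₀ * D⁻¹) * (D * U₀ * D⁻¹) = D * B * D⁻¹ := by
      rw [← hB]
      simp only [Matrix.mul_assoc]
      rw [← Matrix.mul_assoc D⁻¹ D (U₀ * D⁻¹), hDiD, Matrix.one_mul]
    rw [hA_eq, hmid]
  · intro i j
    rw [← hDdef, hcanc L₀, hL₀def, Matrix.of_apply]
    by_cases hc : (j = i ∨ (A i i ≠ 0 ∧ j = auxr A i))
    · right
      rw [if_pos hc]
    · left
      rw [if_neg hc]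
  · intro i j
    rw [← hDdef, hcanc U₀, hU₀def, Matrix.of_apply]
    by_cases hc : (auxr A i = i ∧ A i j ≠ 0)
    · right
      rw [if_pos hc]
    · left
      rw [if_neg hc]
end

section
/- Let $A \in \mathbb{C}^{n \times n}$ be a Hermitian positive semidefinite matrix all of whose nonzero entries have modulus $1$. Then there exists a lower triangular matrix $L \in \mathbb{C}^{n \times n}$ with $A = L L^*$ and a unitary diagonal matrix $D$ (a diagonal matrix all of whose diagonal entries have modulus $1$) such that $D^{-1} L D$ has all entries equal to $0$ or $1$. -/
open scoped ComplexOrder Matrix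

/-- A Hermitian positive semidefinite matrix whose nonzero entries all have modulus `1`
admits a Cholesky factorization `A = L L*` with `L` lower triangular such that
`D⁻¹ L D` is a `(0,1)`-matrix for some unitary diagonal matrix `D`. -/
theorem stmt9 (n : ℕ) (A : Matrix (Fin n) (Fin n) ℂ) (hA : A.PosSemidef)
    (h : ∀ i j, A i j ≠ 0 → ‖A i j‖ = 1) :
    ∃ L : Matrix (Fin n) (Fin n) ℂ,
      (∀ i j : Fin n, i < j → L i j = 0) ∧ A = L * Lᴴ ∧
      ∃ d : Fin n → ℂ, (∀ i, ‖d i‖ = 1) ∧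
        (∀ i j, ((Matrix.diagonal d)⁻¹ * L * Matrix.diagonal d) i j = 0 ∨
                ((Matrix.diagonal d)⁻¹ * L * Matrix.diagonal d) i j = 1) := by
  classical
  have herm : ∀ i j, A j i = starRingEnd ℂ (A i j) := fun i j => (hA.1.apply j i).symm
  have hsd : ∀ (i : Fin n) (v : Fin n → ℂ), star (Pi.single i (1:ℂ)) ⬝ᵥ v = v i := by
    intro i v
    simp [dotProduct, Pi.single_apply, apply_ite, Finset.sum_ite_eq]
  have hdiag0 : ∀ i, 0 ≤ A i i := by
    intro i
    have := hA.dotProduct_mulVec_nonneg (Pi.single i 1)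
    simpa [Matrix.mulVec_single, hsd] using this
  have hcol : ∀ i, A i i = 0 → ∀ k, A k i = 0 := by
    intro i hi k
    have h0 : star (Pi.single i (1:ℂ)) ⬝ᵥ A *ᵥ (Pi.single i 1) = 0 := by
      simpa [Matrix.mulVec_single, hsd] using hi
    have := (hA.dotProduct_mulVec_zero_iff _).mp h0
    have hk := congrFun this k
    simpa [Matrix.mulVec_single] using hk
  have hrow : ∀ i, A i i = 0 → ∀ k, A i k = 0 := by
    intro i hi k
    rw [herm k i, hcol i hi k, map_zero]
  have hone : ∀ i, A i i ≠ 0 → A i i = 1 := by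
    intro i hi
    have habs := h i i hi
    have hnn := hdiag0 i
    rw [Complex.nonneg_iff] at hnn
    have hz : A i i = ((A i i).re : ℂ) := by
      apply Complex.ext <;> simp [← hnn.2]
    rw [hz, Complex.norm_of_nonneg hnn.1] at habs
    rw [hz, habs]; norm_num
  have hmul : ∀ i j k, A i j ≠ 0 → A i k = A i j * A j k := by
    intro i j k hij
    have hii : A i i = 1 := hone i fun h0 => hij (hrow i h0 j)
    have hjj : A j j = 1 := by
      refine hone j fun h0 => hij ?_
      rw [herm j i, hrow j h0 i, map_zero]
    set a := starRingEnd ℂ (A i j) with ha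
    have haa : a * A i j = 1 := by
      rw [ha, mul_comm, Complex.mul_conj]
      norm_cast
      rw [← Complex.sq_norm, h i j hij, one_pow]
    set w : Fin n → ℂ := Pi.single i 1 - Pi.single j a with hw
    have hsw : star w = Pi.single i 1 - Pi.single j (starRingEnd ℂ a) := by
      ext m
      simp only [hw, Pi.star_apply, Pi.sub_apply, Pi.single_apply]
      split_ifs <;> simp
    have hAw : ∀ k, (A *ᵥ w) k = A k i - A k j * a := by
      intro k
      simp [hw, Matrix.mulVec_sub, Matrix.mulVec_single]
      ring
    have h0 : star w ⬝ᵥ A *ᵥ w = 0 := by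
      rw [hsw, sub_dotProduct, single_dotProduct,
        single_dotProduct, hAw i, hAw j, hii, hjj, herm i j, ← ha]
      linear_combination -haa
    have hker := (hA.dotProduct_mulVec_zero_iff _).mp h0
    have hk := congrFun hker k
    rw [hAw k, Pi.zero_apply, sub_eq_zero] at hk
    have hc := congrArg (starRingEnd ℂ) hk
    rw [map_mul, ← herm k i, ← herm k j, ha, Complex.conj_conj] at hc
    linear_combination hc
  have hsymm : ∀ i j : Fin n, A i j ≠ 0 → A j i ≠ 0 := by
    intro i j hij
    rw [herm i j]
    simpa using hij
  -- support sets
  set S : Fin n → Finset (Fin n) := fun i => Finset.univ.filter (fun j => A i j ≠ 0) with hS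
  have hSeq : ∀ i j, A i j ≠ 0 → S i = S j := by
    intro i j hij
    ext k
    simp only [hS, Finset.mem_filter, Finset.mem_univ, true_and]
    constructor
    · intro hik
      rw [hmul j i k (hsymm i j hij)]
      exact mul_ne_zero (hsymm i j hij) hik
    · intro hjk
      rw [hmul i j k hij]
      exact mul_ne_zero hij hjk
  set r : Fin n → Fin n := fun i =>
    if hi : (S i).Nonempty then (S i).min' hi else i with hr
  have hrS : ∀ i, A i i ≠ 0 → A i (r i) ≠ 0 := by
    intro i hi
    have hne : (S i).Nonempty := ⟨i, by simp [hS, hi]⟩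
    have : r i ∈ S i := by
      rw [hr]; simp only [dif_pos hne]; exact (S i).min'_mem hne
    simpa [hS] using this
  have hrle : ∀ i, A i i ≠ 0 → r i ≤ i := by
    intro i hi
    have hne : (S i).Nonempty := ⟨i, by simp [hS, hi]⟩
    rw [hr]; simp only [dif_pos hne]
    exact (S i).min'_le i (by simp [hS, hi])
  have hreq : ∀ i j, A i j ≠ 0 → r i = r j := by
    intro i j hij
    have hne : (S i).Nonempty := ⟨j, by simp [hS, hij]⟩
    have hne' : (S j).Nonempty := ⟨i, by simp [hS, hsymm i j hij]⟩
    rw [hr]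
    simp only [dif_pos hne, dif_pos hne']
    congr 1
    exact hSeq i j hij
  -- the phases
  set d : Fin n → ℂ := fun i => if A i i ≠ 0 then A i (r i) else 1 with hd
  have habsd : ∀ i, ‖d i‖ = 1 := by
    intro i
    rw [hd]
    by_cases hi : A i i ≠ 0
    · simp only [if_pos hi]
      exact h i (r i) (hrS i hi)
    · simp [hi]
  have hdne : ∀ i, d i ≠ 0 := by
    intro i hzero
    have := habsd i
    rw [hzero] at this
    simp at this
  have hdr : ∀ i, A i i ≠ 0 → d (r i) = 1 := by
    intro i hi
    have h1 : A i (r i) ≠ 0 := hrS i hi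
    have h2 : A (r i) (r i) ≠ 0 := fun h0 => (hsymm i (r i) h1) (hrow (r i) h0 i)
    have h3 : r (r i) = r i := (hreq i (r i) h1).symm
    rw [hd]
    simp only [if_pos h2, h3]
    exact hone (r i) h2
  -- the matrix L
  set L : Matrix (Fin n) (Fin n) ℂ :=
    Matrix.of (fun i j => if A i i ≠ 0 ∧ j = r i then d i else 0) with hL
  refine ⟨L, ?_, ?_, d, habsd, ?_⟩
  · intro i j hij
    rw [hL]
    simp only [Matrix.of_apply, ite_eq_right_iff]
    rintro ⟨hi, rfl⟩
    exact absurd (hrle i hi) (not_le.mpr hij)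
  · ext i j
    rw [Matrix.mul_apply]
    simp only [Matrix.conjTranspose_apply, hL, Matrix.of_apply]
    by_cases hi : A i i ≠ 0
    · by_cases hj : A j j ≠ 0
      · rw [Finset.sum_eq_single (r i)]
        · rw [if_pos ⟨hi, rfl⟩]
          by_cases hrij : r i = r j
          · rw [if_pos ⟨hj, hrij⟩]
            have hdi : d i = A i (r i) := by rw [hd]; simp [hi]
            have hdj : d j = A j (r j) := by rw [hd]; simp [hj]
            rw [hdi, hdj, hrij, Complex.star_def, ← herm j (r j)]
            exact hmul i (r j) j (hrij ▸ hrS i hi)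
          · rw [if_neg (fun hc : A j j ≠ 0 ∧ r i = r j => hrij hc.2), star_zero,
              mul_zero]
            by_contra hne
            exact hrij (hreq i j hne)
        · intro k _ hk
          rw [if_neg (fun hc : A i i ≠ 0 ∧ k = r i => hk hc.2), zero_mul]
        · intro hmem
          exact absurd (Finset.mem_univ (r i)) hmem
      · push_neg at hj
        have : A i j = 0 := by rw [herm j i, hrow j hj i, map_zero]
        rw [this]
        apply (Finset.sum_eq_zero _).symm
        intro k _
        rw [if_neg (fun hc : A j j ≠ 0 ∧ k = r j => hc.1 hj), star_zero, mul_zero]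
    · push_neg at hi
      rw [hrow i hi j]
      apply (Finset.sum_eq_zero _).symm
      intro k _
      rw [if_neg (fun hc : A i i ≠ 0 ∧ k = r i => hc.1 hi), zero_mul]
  · intro i j
    have hDinv : (Matrix.diagonal d)⁻¹ = Matrix.diagonal (fun i => (d i)⁻¹) := by
      apply Matrix.inv_eq_left_inv
      rw [Matrix.diagonal_mul_diagonal,
        show (fun i => (d i)⁻¹ * d i) = fun _ => (1:ℂ) from
          funext fun i => inv_mul_cancel₀ (hdne i), Matrix.diagonal_one]
    rw [hDinv, Matrix.mul_diagonal, Matrix.diagonal_mul, hL]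
    simp only [Matrix.of_apply]
    by_cases hc : A i i ≠ 0 ∧ j = r i
    · right
      rw [if_pos hc, hc.2, inv_mul_cancel₀ (hdne i), one_mul]
      exact hdr i hc.1
    · left
      rw [if_neg hc, mul_zero, zero_mul]
end
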